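/- Let A be a unital C*-algebra, q ∈ A a projection, and x ∈ A a unitary. Then ‖qx − xq‖² = max{‖q − q x q x* q‖, ‖q − q x* q x q‖}. -/

import Mathlib

open CStarAlgebra in
lemma norm_add_of_orthogonal {A : Type} [CStarAlgebra A] [PartialOrder A] [StarOrderedRing A]
    (u v : A) (hu : 0 ≤ u) (hv : 0 ≤ v) (huv : u * v = 0) (hvu : v * u = 0) :
    ‖u + v‖ = max ‖u‖ ‖v‖ := by
  have key : ∀ w : A, 0 ≤ w → w * w ≤ ‖w‖ • w := by
    intro w hw
    obtain ⟨s, hs0, hss⟩ : ∃ s : A, star s = s ∧ s * s = w :=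
      ⟨CFC.sqrt w, (IsSelfAdjoint.of_nonneg (CFC.sqrt_nonneg (a := w))).star_eq,
        CFC.sqrt_mul_sqrt_self w hw⟩
    have h1 := star_left_conjugate_le_norm_smul (a := s) (b := w) (IsSelfAdjoint.of_nonneg hw)
    rw [hs0] at h1
    calc w * w = s * w * s := by rw [← hss]; simp [mul_assoc]
      _ ≤ ‖w‖ • (s * s) := h1
      _ = ‖w‖ • w := by rw [hss]
  have hle1 : ‖u‖ ≤ ‖u + v‖ :=
    norm_le_norm_of_nonneg_of_le hu (le_add_of_nonneg_right hv)
  have hle2 : ‖v‖ ≤ ‖u + v‖ :=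
    norm_le_norm_of_nonneg_of_le hv (le_add_of_nonneg_left hu)
  refine le_antisymm ?_ (max_le hle1 hle2)
  set M := max ‖u‖ ‖v‖ with hM
  rcases eq_or_lt_of_le (norm_nonneg (u + v)) with h0 | h0
  · exact h0 ▸ le_max_of_le_left (norm_nonneg u)
  have hsq : (u + v) * (u + v) = u * u + v * v := by
    rw [add_mul, mul_add, mul_add, huv, hvu]; abel
  have hb : (u + v) * (u + v) ≤ M • (u + v) := by
    rw [hsq, smul_add]
    gcongr
    · calc u * u ≤ ‖u‖ • u := key u hu
        _ ≤ M • u := by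
          rw [← sub_nonneg, ← sub_smul]
          exact smul_nonneg (by simp [hM]) hu
    · calc v * v ≤ ‖v‖ • v := key v hv
        _ ≤ M • v := by
          rw [← sub_nonneg, ← sub_smul]
          exact smul_nonneg (by simp [hM]) hv
  have hsa : star (u + v) = u + v := (IsSelfAdjoint.of_nonneg (add_nonneg hu hv)).star_eq
  have hnn : (0:A) ≤ (u + v) * (u + v) := by
    simpa [hsa] using star_mul_self_nonneg (u + v)
  have hnorm := norm_le_norm_of_nonneg_of_le hnn hb
  rw [show (u+v)*(u+v) = star (u+v) * (u+v) by rw [hsa], CStarRing.norm_star_mul_self,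
    norm_smul, Real.norm_of_nonneg (le_trans (norm_nonneg u) (le_max_left _ _))] at hnorm
  exact le_of_mul_le_mul_right (by linarith) h0

lemma aux_ring {A : Type} [Ring A] (q x y : A) (hq2 : q * q = q) (hxy : x * y = 1) :
    (q * x * (1 - q)) * ((1 - q) * y * q) = q - q * x * q * y * q := by
  have h1 : (q * x * (1 - q)) * ((1 - q) * y * q) =
      q * (x * y) * q - q * x * q * y * q - (q * x * q * y * q - q * x * (q * q) * y * q) := by
    noncomm_ring
  rw [h1, hq2, hxy, mul_one, hq2]
  abel

/-- For a projection `q` and a unitary `x` in a unital C*-algebra,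
`‖[q,x]‖² = max{‖q - qxqx*q‖, ‖q - qx*qxq‖}`. -/
theorem commutator_norm_sq_eq
    (A : Type) [CStarAlgebra A] (q x : A)
    (hq : IsSelfAdjoint q ∧ IsIdempotentElem q) (hx : x ∈ unitary A) :
    ‖q * x - x * q‖ ^ 2 =
      max ‖q - q * x * q * star x * q‖ ‖q - q * star x * q * x * q‖ := by
  letI := CStarAlgebra.spectralOrder A
  haveI := CStarAlgebra.spectralOrderedRing A
  obtain ⟨hqsa, hq2⟩ := hq
  have hq2 : q * q = q := hq2
  obtain ⟨hx1, hx2⟩ := Unitary.mem_iff.mp hx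
  set p : A := 1 - q with hp
  have hqp : q * p = 0 := by simp [hp, mul_sub, hq2]
  have hpq : p * q = 0 := by simp [hp, sub_mul, hq2]
  have hpp : p * p = p := by simp [hp, mul_sub, sub_mul, hq2]
  have hqs : star q = q := hqsa.star_eq
  have hps : star p = p := by simp [hp, star_sub, hqs]
  set a : A := q * x * p with ha
  set b : A := p * x * q with hb
  have hsa : star a = p * star x * q := by simp [ha, star_mul, hqs, hps, mul_assoc]
  have hsb : star b = q * star x * p := by simp [hb, star_mul, hqs, hps, mul_assoc]
  have hc : q * x - x * q = a - b := by simp [ha, hb, hp]; noncomm_ring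
  set u : A := star a * a with hu
  set v : A := star b * b with hv
  have hab : star a * b = 0 := by
    rw [hsa, hb, show p * star x * q * (p * x * q) = p * star x * (q * p) * (x * q) by
      noncomm_ring, hqp]; simp
  have hba : star b * a = 0 := by
    rw [hsb, ha, show q * star x * p * (q * x * p) = q * star x * (p * q) * (x * p) by
      noncomm_ring, hpq]; simp
  have hcc : star (a - b) * (a - b) = u + v := by
    rw [star_sub, sub_mul, mul_sub, mul_sub, hab, hba, hu, hv]; abel
  have huv : u * v = 0 := by
    have h1 : a * star b = 0 := by
      rw [ha, hsb, show q * x * p * (q * star x * p) = q * x * (p * q) * (star x * p) by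
        noncomm_ring, hpq]; simp
    rw [hu, hv, show star a * a * (star b * b) = star a * (a * star b) * b by noncomm_ring,
      h1]; simp
  have hvu : v * u = 0 := by
    have h1 : b * star a = 0 := by
      rw [hb, hsa, show p * x * q * (p * star x * q) = p * x * (q * p) * (star x * q) by
        noncomm_ring, hqp]; simp
    rw [hu, hv, show star b * b * (star a * a) = star b * (b * star a) * a by noncomm_ring,
      h1]; simp
  have hu0 : (0:A) ≤ u := star_mul_self_nonneg a
  have hv0 : (0:A) ≤ v := star_mul_self_nonneg b
  -- identify the two positive elements
  have hua : a * star a = q - q * x * q * star x * q := by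
    rw [ha, hsa, hp]
    exact aux_ring q x (star x) hq2 hx2
  have hvb : v = q - q * star x * q * x * q := by
    rw [hv, hsb, hb, hp]
    exact aux_ring q (star x) x hq2 hx1
  have hnu : ‖u‖ = ‖q - q * x * q * star x * q‖ := by
    rw [hu, CStarRing.norm_star_mul_self, ← CStarRing.norm_self_mul_star, hua]
  calc ‖q * x - x * q‖ ^ 2 = ‖star (a - b) * (a - b)‖ := by
        rw [hc, CStarRing.norm_star_mul_self, sq]
    _ = ‖u + v‖ := by rw [hcc]
    _ = max ‖u‖ ‖v‖ := norm_add_of_orthogonal u v hu0 hv0 huv hvu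
    _ = max ‖q - q * x * q * star x * q‖ ‖q - q * star x * q * x * q‖ := by rw [hnu, hvb]
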